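/- Let D and D̃ be dictionaries with ‖D − D̃‖_{1,2} ≤ λ, let a* be a minimizer of the LASSO objective for D at x and ã* a minimizer of the LASSO objective for D̃ at x. Then | ‖D a*‖_2² − ‖D ã*‖_2² | ≤ (‖x‖_2 + 3) ‖x‖_2³ · ‖D − D̃‖_{1,2} / λ. -/

import Mathlib

open Finset Matrix

noncomputable def norm2 {ι : Type*} [Fintype ι] (v : ι → ℝ) : ℝ :=
  Real.sqrt (∑ i, v i ^ 2)

noncomputable def norm1 {ι : Type*} [Fintype ι] (v : ι → ℝ) : ℝ :=
  ∑ i, |v i|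

noncomputable def norm0 {ι : Type*} (v : ι → ℝ) : ℕ :=
  Set.ncard {i | v i ≠ 0}

noncomputable def dot {ι : Type*} [Fintype ι] (u v : ι → ℝ) : ℝ :=
  ∑ i, u i * v i

def col {d m : ℕ} (D : Matrix (Fin d) (Fin m) ℝ) (i : Fin m) : Fin d → ℝ :=
  fun r => D r i

def IsDictionary {d m : ℕ} (D : Matrix (Fin d) (Fin m) ℝ) : Prop :=
  ∀ i, norm2 (_root_.col D i) = 1

noncomputable def norm12 {d m : ℕ} (E : Matrix (Fin d) (Fin m) ℝ) : ℝ :=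
  ⨆ i : Fin m, norm2 (_root_.col E i)

noncomputable def lassoObj {d m : ℕ} (lam : ℝ) (D : Matrix (Fin d) (Fin m) ℝ)
    (x : Fin d → ℝ) (z : Fin m → ℝ) : ℝ :=
  (1/2) * (norm2 (x - D.mulVec z))^2 + lam * norm1 z

def IsLassoMin {d m : ℕ} (lam : ℝ) (D : Matrix (Fin d) (Fin m) ℝ)
    (x : Fin d → ℝ) (a : Fin m → ℝ) : Prop :=
  ∀ z, lassoObj lam D x a ≤ lassoObj lam D x z

def Incoherent {d m : ℕ} (mu : ℝ) (D : Matrix (Fin d) (Fin m) ℝ) : Prop :=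
  ∀ i j, i ≠ j → |dot (_root_.col D i) (_root_.col D j)| ≤ mu / Real.sqrt d

noncomputable def kMargin {d m : ℕ} (lam : ℝ) (k : ℕ) (D : Matrix (Fin d) (Fin m) ℝ)
    (x : Fin d → ℝ) (a : Fin m → ℝ) : ℝ :=
  ⨆ I : {I : Finset (Fin m) // I.card = m - k},
    ⨅ j : {j : Fin m // j ∈ I.1}, (lam - |dot (_root_.col D j.1) (x - D.mulVec a)|)

/- ### Auxiliary lemmas -/

lemma norm2_nonneg' {ι : Type*} [Fintype ι] (v : ι → ℝ) : 0 ≤ norm2 v := Real.sqrt_nonneg _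

lemma sq_norm2 {ι : Type*} [Fintype ι] (v : ι → ℝ) : (norm2 v)^2 = ∑ i, v i ^ 2 :=
  Real.sq_sqrt (by positivity)

lemma norm2_eq_norm {ι : Type*} [Fintype ι] (v : ι → ℝ) :
    norm2 v = ‖(WithLp.equiv 2 (ι → ℝ)).symm v‖ := by
  rw [EuclideanSpace.norm_eq]
  simp [norm2, Real.norm_eq_abs, sq_abs]

lemma norm2_sub_le {ι : Type*} [Fintype ι] (u v : ι → ℝ) :
    norm2 (u - v) ≤ norm2 u + norm2 v := by
  simp only [norm2_eq_norm]
  rw [show (WithLp.equiv 2 (ι → ℝ)).symm (u-v)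
      = (WithLp.equiv 2 (ι → ℝ)).symm u - (WithLp.equiv 2 (ι → ℝ)).symm v from rfl]
  exact norm_sub_le _ _

lemma abs_norm2_sub_norm2 {ι : Type*} [Fintype ι] (u v : ι → ℝ) :
    |norm2 u - norm2 v| ≤ norm2 (u - v) := by
  simp only [norm2_eq_norm]
  rw [show (WithLp.equiv 2 (ι → ℝ)).symm (u-v)
      = (WithLp.equiv 2 (ι → ℝ)).symm u - (WithLp.equiv 2 (ι → ℝ)).symm v from rfl]
  exact abs_norm_sub_norm_le _ _

lemma norm2_neg {ι : Type*} [Fintype ι] (v : ι → ℝ) : norm2 (-v) = norm2 v := by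
  unfold norm2
  congr 1
  exact Finset.sum_congr rfl fun i _ => by rw [Pi.neg_apply, neg_sq]

lemma norm2_le_add {ι : Type*} [Fintype ι] (u v : ι → ℝ) :
    norm2 v ≤ norm2 u + norm2 (u - v) := by
  have h := abs_norm2_sub_norm2 v u
  have h2 : norm2 (v - u) = norm2 (u - v) := by
    rw [show v - u = -(u - v) from by ring, norm2_neg]
  rw [h2] at h
  have := abs_le.mp h
  linarith [this.2]

lemma norm2_sum_smul_le {ι κ : Type*} [Fintype ι] [Fintype κ] (c : κ → ℝ) (v : κ → ι → ℝ) :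
    norm2 (∑ i, c i • v i) ≤ ∑ i, |c i| * norm2 (v i) := by
  simp only [norm2_eq_norm]
  rw [show (WithLp.equiv 2 (ι → ℝ)).symm (∑ i, c i • v i)
      = ∑ i, c i • (WithLp.equiv 2 (ι → ℝ)).symm (v i) from by ext j; simp [Finset.sum_apply]]
  refine (norm_sum_le _ _).trans ?_
  exact Finset.sum_le_sum fun i _ => by rw [norm_smul, Real.norm_eq_abs]

lemma norm1_nonneg' {ι : Type*} [Fintype ι] (v : ι → ℝ) : 0 ≤ norm1 v :=
  Finset.sum_nonneg fun _ _ => abs_nonneg _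

lemma norm12_nonneg' {d m : ℕ} (E : Matrix (Fin d) (Fin m) ℝ) : 0 ≤ norm12 E :=
  Real.iSup_nonneg fun _ => norm2_nonneg' _

lemma col_le_norm12 {d m : ℕ} (E : Matrix (Fin d) (Fin m) ℝ) (i : Fin m) :
    norm2 (_root_.col E i) ≤ norm12 E :=
  by unfold norm12; exact le_ciSup (f := fun i => norm2 (_root_.col E i)) (Set.Finite.bddAbove (Set.finite_range _)) i

lemma mulVec_eq_sum' {d m : ℕ} (E : Matrix (Fin d) (Fin m) ℝ) (z : Fin m → ℝ) :
    E.mulVec z = ∑ i, z i • _root_.col E i := by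
  funext r
  rw [Finset.sum_apply]
  simp [Matrix.mulVec, dotProduct, _root_.col, mul_comm]

lemma norm2_mulVec_le {d m : ℕ} (E : Matrix (Fin d) (Fin m) ℝ) (z : Fin m → ℝ) :
    norm2 (E.mulVec z) ≤ norm12 E * norm1 z := by
  rw [mulVec_eq_sum']
  refine (norm2_sum_smul_le _ _).trans ?_
  rw [norm1, Finset.mul_sum]
  refine Finset.sum_le_sum fun i _ => ?_
  rw [mul_comm (norm12 E) _]
  exact mul_le_mul_of_nonneg_left (col_le_norm12 E i) (abs_nonneg _)

lemma quad_key (W b : ℝ) (hW : 0 ≤ W)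
    (h : ∀ t : ℝ, 0 ≤ t → W/2 + b ≤ W/2*t^2 + b*t) : W + b = 0 := by
  by_contra hne
  have hc : 0 < |W + b| := abs_pos.mpr hne
  have key : ∀ s : ℝ, 0 < s → s ≤ 1 → |W + b| ≤ W * s / 2 := by
    intro s hs hs1
    have h1 := h (1 + s) (by linarith)
    have h2 := h (1 - s) (by linarith)
    rw [abs_le]
    constructor <;> nlinarith
  have hs0 : 0 < |W + b| / (W + 1) := div_pos hc (by linarith)
  have hle : |W + b| ≤ W / 2 := by
    have := key 1 one_pos le_rfl; linarith
  have hs1 : |W + b| / (W + 1) ≤ 1 := by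
    rw [div_le_one (by linarith)]; linarith
  have h4 := key _ hs0 hs1
  have h5 : W * (|W + b| / (W + 1)) / 2 = (W * |W + b| / 2) / (W + 1) := by ring
  rw [h5, le_div_iff₀ (by linarith : (0:ℝ) < W + 1)] at h4
  nlinarith [h4, hc, hW]

lemma norm1_smul' {ι : Type*} [Fintype ι] (t : ℝ) (ht : 0 ≤ t) (v : ι → ℝ) :
    norm1 (t • v) = t * norm1 v := by
  unfold norm1
  rw [Finset.mul_sum]
  exact Finset.sum_congr rfl fun i _ => by simp [abs_mul, abs_of_nonneg ht]

lemma lasso_identity {d m : ℕ} {lam : ℝ} {D : Matrix (Fin d) (Fin m) ℝ}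
    {x : Fin d → ℝ} {a : Fin m → ℝ} (ha : IsLassoMin lam D x a) :
    (norm2 (D.mulVec a))^2 = (norm2 x)^2 - 2 * lassoObj lam D x a := by
  set w := D.mulVec a with hw
  set X2 := ∑ i, x i ^ 2 with hX2
  set W := ∑ i, w i ^ 2 with hWdef
  set P := ∑ i, x i * w i with hP
  set L := norm1 a with hL
  have expand : ∀ t : ℝ, ∑ i, (x i - t * w i) ^ 2 = X2 - 2*t*P + t^2*W := by
    intro t
    rw [hX2, hWdef, hP, Finset.mul_sum, Finset.mul_sum, ← Finset.sum_sub_distrib,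
      ← Finset.sum_add_distrib]
    exact Finset.sum_congr rfl fun i _ => by ring
  have hWnn : 0 ≤ W := Finset.sum_nonneg fun i _ => sq_nonneg _
  have hobj : ∀ t : ℝ, 0 ≤ t →
      lassoObj lam D x (t • a) = (1/2) * (X2 - 2*t*P + t^2*W) + t * (lam * L) := by
    intro t ht
    unfold lassoObj
    rw [Matrix.mulVec_smul, norm1_smul' t ht, ← hw, sq_norm2]
    have heq : ∀ i, (x - t • w) i = x i - t * w i := fun i => rfl
    rw [show (∑ i, ((x - t • w) i)^2) = ∑ i, (x i - t * w i)^2 from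
      Finset.sum_congr rfl fun i _ => by rw [heq], expand t]
    ring
  have hobj1 : lassoObj lam D x a = (1/2) * (X2 - 2*P + W) + lam * L := by
    have := hobj 1 zero_le_one
    rw [one_smul] at this
    rw [this]; ring
  have hkey : W + (lam * L - P) = 0 := by
    apply quad_key _ _ hWnn
    intro t ht
    have h1 := ha (t • a)
    rw [hobj t ht, hobj1] at h1
    nlinarith [h1]
  rw [hw, sq_norm2, ← hWdef, hobj1, sq_norm2, ← hX2]
  linarith

set_option maxHeartbeats 1600000 in
theorem reconstructor_norm_stability_same_dict {d m : ℕ} (lam : ℝ) (hlam : 0 < lam)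
    (D Dt : Matrix (Fin d) (Fin m) ℝ) (hD : IsDictionary D) (hDt : IsDictionary Dt)
    (hclose : norm12 (D - Dt) ≤ lam) (x : Fin d → ℝ)
    (a at' : Fin m → ℝ) (ha : IsLassoMin lam D x a) (hat : IsLassoMin lam Dt x at') :
    |(norm2 (D.mulVec a))^2 - (norm2 (D.mulVec at'))^2|
      ≤ (norm2 x + 3) * (norm2 x)^3 * norm12 (D - Dt) / lam := by
  set ε := norm12 (D - Dt) with hε
  set X := norm2 x with hX
  set La := norm1 a with hLa
  set Lt := norm1 at' with hLt
  set A := norm2 (x - D.mulVec a) with hA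
  set B := norm2 (x - Dt.mulVec at') with hB
  set u := ε / lam with hu
  have hX0 : 0 ≤ X := norm2_nonneg' _
  have hε0 : 0 ≤ ε := norm12_nonneg' _
  have hu0 : 0 ≤ u := div_nonneg hε0 hlam.le
  have hu1 : u ≤ 1 := by rw [hu, div_le_one hlam]; exact hclose
  have hεu : ε = u * lam := by rw [hu]; field_simp
  have hA0 : 0 ≤ A := norm2_nonneg' _
  have hB0 : 0 ≤ B := norm2_nonneg' _
  have hLa0 : 0 ≤ La := norm1_nonneg' _
  have hLt0 : 0 ≤ Lt := norm1_nonneg' _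
  -- objective at zero
  have hzero : ∀ (E : Matrix (Fin d) (Fin m) ℝ), lassoObj lam E x 0 = (1/2) * X^2 := by
    intro E
    unfold lassoObj
    rw [Matrix.mulVec_zero, sub_zero]
    have : norm1 (0 : Fin m → ℝ) = 0 := by simp [norm1]
    rw [this, hX]; ring
  have hfa_def : lassoObj lam D x a = (1/2) * A^2 + lam * La := rfl
  have hft_def : lassoObj lam Dt x at' = (1/2) * B^2 + lam * Lt := rfl
  have hfa0 := ha 0
  have hft0 := hat 0
  rw [hzero, hfa_def] at hfa0
  rw [hzero, hft_def] at hft0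
  have hqa : lam * La ≤ X^2 / 2 := by nlinarith
  have hqt : lam * Lt ≤ X^2 / 2 := by nlinarith
  have hAX : A ≤ X := by nlinarith
  have hBX : B ≤ X := by nlinarith
  -- perturbation norms
  have hsub : ∀ z : Fin m → ℝ, norm2 (D.mulVec z - Dt.mulVec z) ≤ ε * norm1 z := by
    intro z
    rw [← Matrix.sub_mulVec]
    exact norm2_mulVec_le _ _
  have heLt : ε * Lt ≤ u * (X^2 / 2) := by
    rw [hεu]
    calc u * lam * Lt = u * (lam * Lt) := by ring
    _ ≤ u * (X^2 / 2) := mul_le_mul_of_nonneg_left hqt hu0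
  have heLa : ε * La ≤ u * (X^2 / 2) := by
    rw [hεu]
    calc u * lam * La = u * (lam * La) := by ring
    _ ≤ u * (X^2 / 2) := mul_le_mul_of_nonneg_left hqa hu0
  have heLt0 : 0 ≤ ε * Lt := mul_nonneg hε0 hLt0
  have heLa0 : 0 ≤ ε * La := mul_nonneg hε0 hLa0
  -- cross objective bounds
  set C := norm2 (x - D.mulVec at') with hC
  have hC0 : 0 ≤ C := norm2_nonneg' _
  have hCle : C ≤ B + ε * Lt := by
    have h1 : x - D.mulVec at' = (x - Dt.mulVec at') - (D.mulVec at' - Dt.mulVec at') := by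
      ring
    rw [hC, h1]
    exact (norm2_sub_le _ _).trans (by linarith [hsub at'])
  set Ct := norm2 (x - Dt.mulVec a) with hCt
  have hCt0 : 0 ≤ Ct := norm2_nonneg' _
  have hCtle : Ct ≤ A + ε * La := by
    have h1 : x - Dt.mulVec a = (x - D.mulVec a) + (D.mulVec a - Dt.mulVec a) := by ring
    rw [hCt, h1, show (x - D.mulVec a) + (D.mulVec a - Dt.mulVec a)
      = (x - D.mulVec a) - -(D.mulVec a - Dt.mulVec a) from by ring]
    refine (norm2_sub_le _ _).trans ?_
    rw [norm2_neg]
    linarith [hsub a]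
  -- minimality cross inequalities
  have hmin1 : lassoObj lam D x a ≤ (1/2) * C^2 + lam * Lt := ha at'
  have hmin2 : lassoObj lam Dt x at' ≤ (1/2) * Ct^2 + lam * La := hat a
  -- identities
  have hida := lasso_identity ha
  have hidt := lasso_identity hat
  rw [← hX] at hida hidt
  -- part 1 : |‖Da‖² - ‖D̃ã‖²| bound
  have hu2 : u^2 ≤ u := by nlinarith [hu0, hu1]
  have h6 : (u*(X^2/2))^2 ≤ u * (X^2/2)^2 := by
    calc (u*(X^2/2))^2 = u^2 * ((X^2/2)^2) := by ring
    _ ≤ u * ((X^2/2)^2) := mul_le_mul_of_nonneg_right hu2 (sq_nonneg _)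
  have hd1 : lassoObj lam D x a - lassoObj lam Dt x at' ≤ u * (X^3/2 + X^4/8) := by
    have h1 : lassoObj lam D x a - lassoObj lam Dt x at' ≤ (1/2)*(C^2 - B^2) := by
      rw [hft_def]; linarith [hmin1]
    have h2 : C^2 ≤ (B + ε*Lt)^2 := pow_le_pow_left₀ hC0 hCle 2
    have hexp : (B + ε*Lt)^2 = B^2 + 2*(B*(ε*Lt)) + (ε*Lt)^2 := by ring
    have h3 : (1/2)*(C^2 - B^2) ≤ B*(ε*Lt) + (1/2)*(ε*Lt)^2 := by linarith
    have h4 : B*(ε*Lt) ≤ X * (u * (X^2/2)) := mul_le_mul hBX heLt heLt0 hX0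
    have h5 : (ε*Lt)^2 ≤ (u * (X^2/2))^2 := pow_le_pow_left₀ heLt0 heLt 2
    have e : u * (X^3/2 + X^4/8) = X*(u*(X^2/2)) + (1/2)*(u*((X^2/2)^2)) := by ring
    linarith
  have hd2 : lassoObj lam Dt x at' - lassoObj lam D x a ≤ u * (X^3/2 + X^4/8) := by
    have h1 : lassoObj lam Dt x at' - lassoObj lam D x a ≤ (1/2)*(Ct^2 - A^2) := by
      rw [hfa_def]; linarith [hmin2]
    have h2 : Ct^2 ≤ (A + ε*La)^2 := pow_le_pow_left₀ hCt0 hCtle 2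
    have hexp : (A + ε*La)^2 = A^2 + 2*(A*(ε*La)) + (ε*La)^2 := by ring
    have h3 : (1/2)*(Ct^2 - A^2) ≤ A*(ε*La) + (1/2)*(ε*La)^2 := by linarith
    have h4 : A*(ε*La) ≤ X * (u * (X^2/2)) := mul_le_mul hAX heLa heLa0 hX0
    have h5 : (ε*La)^2 ≤ (u * (X^2/2))^2 := pow_le_pow_left₀ heLa0 heLa 2
    have e : u * (X^3/2 + X^4/8) = X*(u*(X^2/2)) + (1/2)*(u*((X^2/2)^2)) := by ring
    linarith
  have part1 : |(norm2 (D.mulVec a))^2 - (norm2 (Dt.mulVec at'))^2| ≤ u * (X^3 + X^4/4) := by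
    rw [hida, hidt, abs_le]
    have e : u * (X^3 + X^4/4) = 2 * (u * (X^3/2 + X^4/8)) := by ring
    constructor <;> linarith [hd1, hd2]
  -- part 2 : |‖Dã‖² - ‖D̃ã‖²| bound
  set G := norm2 (D.mulVec at') with hG
  set H := norm2 (Dt.mulVec at') with hH
  have hG0 : 0 ≤ G := norm2_nonneg' _
  have hH0 : 0 ≤ H := norm2_nonneg' _
  have hHX : H ≤ 2 * X := by
    have := norm2_le_add x (Dt.mulVec at')
    rw [← hX, ← hB, ← hH] at this
    linarith
  have hGH : G ≤ H + ε * Lt := by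
    have h1 : D.mulVec at' = Dt.mulVec at' - -(D.mulVec at' - Dt.mulVec at') := by ring
    rw [hG, h1]
    refine (norm2_sub_le _ _).trans ?_
    rw [norm2_neg]
    linarith [hsub at']
  have hGdiff : |G - H| ≤ ε * Lt := by
    refine (abs_norm2_sub_norm2 _ _).trans ?_
    exact hsub at'
  have part2 : |G^2 - H^2| ≤ u * (2*X^3 + X^4/4) := by
    have h1 : |G^2 - H^2| = (G + H) * |G - H| := by
      rw [show G^2 - H^2 = (G+H)*(G-H) from by ring, abs_mul,
        abs_of_nonneg (by linarith : (0:ℝ) ≤ G + H)]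
    rw [h1]
    have h2 : G + H ≤ 4*X + u * (X^2/2) := by linarith
    have h3 : (G + H) * |G - H| ≤ (4*X + u*(X^2/2)) * (u * (X^2/2)) := by
      refine mul_le_mul h2 (hGdiff.trans heLt) (abs_nonneg _) ?_
      have : 0 ≤ u * (X^2/2) := mul_nonneg hu0 (by positivity)
      linarith
    refine h3.trans ?_
    have e1 : (4*X + u*(X^2/2)) * (u*(X^2/2)) = 2*(u*X^3) + (u*(X^2/2))^2 := by ring
    have e2 : u*(2*X^3 + X^4/4) = 2*(u*X^3) + u*((X^2/2)^2) := by ring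
    linarith [h6]
  -- combine
  have htotal : |(norm2 (D.mulVec a))^2 - G^2| ≤ u * (3*X^3 + X^4/2) := by
    have := abs_sub_le ((norm2 (D.mulVec a))^2) (H^2) (G^2)
    have h2 : |H^2 - G^2| = |G^2 - H^2| := abs_sub_comm _ _
    calc |(norm2 (D.mulVec a))^2 - G^2|
        ≤ |(norm2 (D.mulVec a))^2 - H^2| + |H^2 - G^2| := this
      _ ≤ u * (X^3 + X^4/4) + u * (2*X^3 + X^4/4) := by rw [h2]; linarith [part1, part2]
      _ = u * (3*X^3 + X^4/2) := by ring
  have hrhs : (X + 3) * X^3 * ε / lam = u * ((X + 3) * X^3) := by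
    rw [hu]; field_simp
  rw [hrhs]
  refine htotal.trans ?_
  have e : u*((X+3)*X^3) = u*(3*X^3 + X^4/2) + (u*X^4)/2 := by ring
  linarith [mul_nonneg hu0 (pow_nonneg hX0 4)]
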